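/- Let u ∈ C²(ℝ, ℂ) be a solution of u'' + a₁|u|u + a₂|u|²u + a₃|u|³u = 0 with u(x) → 0 as x → ±∞ and u not identically zero. Then there exist θ₀ ∈ ℝ and a positive real-valued solution ρ of the same equation such that u = e^{iθ₀}ρ. -/

import Mathlib

open Filter

private lemma hdRe {f : ℝ → ℂ} {f' : ℂ} {x : ℝ} (h : HasDerivAt f f' x) :
    HasDerivAt (fun y => (f y).re) f'.re x := by
  exact Complex.reCLM.hasFDerivAt.comp_hasDerivAt x h

private lemma hdIm {f : ℝ → ℂ} {f' : ℂ} {x : ℝ} (h : HasDerivAt f f' x) :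
    HasDerivAt (fun y => (f y).im) f'.im x := by
  exact Complex.imCLM.hasFDerivAt.comp_hasDerivAt x h

private lemma hdOfReal {f : ℝ → ℝ} {f' x : ℝ} (h : HasDerivAt f f' x) :
    HasDerivAt (fun y => ((f y : ℝ) : ℂ)) (f' : ℂ) x := by
  exact Complex.ofRealCLM.hasFDerivAt.comp_hasDerivAt x h

private lemma hdConj {f : ℝ → ℂ} {f' : ℂ} {x : ℝ} (h : HasDerivAt f f' x) :
    HasDerivAt (fun y => (starRingEnd ℂ) (f y)) ((starRingEnd ℂ) f') x := by
  simpa using h.star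

private lemma abs_rpow_eq (a : ℝ) (ha : 0 ≤ a) (n : ℕ) : (a^2) ^ ((n:ℝ)/2) = a ^ n := by
  have h : ((2:ℕ):ℝ) * ((n:ℝ)/2) = (n:ℝ) := by push_cast; ring
  rw [← Real.rpow_natCast a 2, ← Real.rpow_mul ha, h, Real.rpow_natCast]

private lemma conj_swap_re (a b : ℂ) : ((starRingEnd ℂ) a * b).re = ((starRingEnd ℂ) b * a).re := by
  simp [Complex.mul_re]; ring

private lemma hdAbsSq {g : ℝ → ℂ} {g' : ℂ} {x : ℝ} (h : HasDerivAt g g' x) :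
    HasDerivAt (fun y => ‖g y‖ ^ 2) (2 * ((starRingEnd ℂ) (g x) * g').re) x := by
  have h3 : HasDerivAt (fun y => ((starRingEnd ℂ) (g y) * g y).re)
      (((starRingEnd ℂ) g' * g x + (starRingEnd ℂ) (g x) * g').re) x :=
    hdRe ((hdConj h).mul h)
  have hfun : (fun y => ‖g y‖ ^ 2) = fun y => ((starRingEnd ℂ) (g y) * g y).re := by
    funext y
    simp [Complex.mul_re, Complex.sq_norm, Complex.normSq_apply]
  rw [hfun]
  convert h3 using 1
  simp [Complex.add_re, Complex.mul_re]
  ring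

private lemma hdAbsPow {g : ℝ → ℂ} {g' : ℂ} {x : ℝ} (h : HasDerivAt g g' x) {n : ℕ} (hn : 2 ≤ n) :
    HasDerivAt (fun y => ‖g y‖ ^ n)
      ((n : ℝ) * ‖g x‖ ^ (n - 2) * ((starRingEnd ℂ) (g x) * g').re) x := by
  have h1 : (1:ℝ) ≤ (n:ℝ)/2 := by
    rw [le_div_iff₀ (by norm_num : (0:ℝ) < 2)]
    exact_mod_cast hn
  have hr := (Real.hasDerivAt_rpow_const (p := (n:ℝ)/2) (x := ‖g x‖ ^ 2)
    (Or.inr h1)).comp x (hdAbsSq h)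
  have hfun : (fun y => ‖g y‖ ^ n)
      = fun y => (‖g y‖ ^ 2) ^ ((n:ℝ)/2) := by
    funext y; rw [abs_rpow_eq _ (norm_nonneg _)]
  rw [hfun]
  refine hr.congr_deriv ?_
  have h2 : (n:ℝ)/2 - 1 = ((n - 2 : ℕ):ℝ)/2 := by
    rw [Nat.cast_sub hn]; push_cast; ring
  rw [h2, abs_rpow_eq _ (norm_nonneg _)]
  ring


set_option maxHeartbeats 1000000 in
theorem stmt7 (a₁ a₂ a₃ : ℝ) (u : ℝ → ℂ) (hu : ContDiff ℝ 2 u)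
    (heq : ∀ x : ℝ, deriv (deriv u) x
      + ((a₁ * ‖u x‖ : ℝ) : ℂ) * u x
      + ((a₂ * ‖u x‖^2 : ℝ) : ℂ) * u x
      + ((a₃ * ‖u x‖^3 : ℝ) : ℂ) * u x = 0)
    (htop : Tendsto u atTop (nhds 0)) (hbot : Tendsto u atBot (nhds 0))
    (hne : ∃ x : ℝ, u x ≠ 0) :
    ∃ θ₀ : ℝ, ∃ ρ : ℝ → ℝ,
      (∀ x : ℝ, 0 < ρ x) ∧
      (∀ x : ℝ, deriv (deriv ρ) x + a₁ * |ρ x| * ρ x + a₂ * |ρ x|^2 * ρ x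
        + a₃ * |ρ x|^3 * ρ x = 0) ∧
      Tendsto ρ atTop (nhds 0) ∧ Tendsto ρ atBot (nhds 0) ∧
      ∀ x : ℝ, u x = Complex.exp (θ₀ * Complex.I) * (ρ x : ℂ) := by
  have h2 : ContDiff ℝ ((1:ℕ∞)+1) u := hu.of_le (by norm_num)
  have hd1 : Differentiable ℝ u := (contDiff_succ_iff_deriv.mp h2).1
  have hcd : ContDiff ℝ ((0:ℕ∞)+1) (deriv u) :=
    ((contDiff_succ_iff_deriv.mp h2).2.2).of_le (by norm_num)
  have hd2 : Differentiable ℝ (deriv u) := (contDiff_succ_iff_deriv.mp hcd).1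
  -- rewritten equation
  set F : ℝ → ℝ := fun x => a₁ * ‖u x‖ + a₂ * ‖u x‖^2
      + a₃ * ‖u x‖^3 with hF
  have heq' : ∀ x, deriv (deriv u) x = -((F x : ℝ):ℂ) * u x := by
    intro x
    have h := heq x
    rw [hF]
    push_cast at h ⊢
    linear_combination h
  -- abs tendsto
  have hAtop : Tendsto (fun x => ‖u x‖) atTop (nhds 0) := by
    simpa using htop.norm
  have hAbot : Tendsto (fun x => ‖u x‖) atBot (nhds 0) := by
    simpa using hbot.norm
  have hFtop : Tendsto F atTop (nhds 0) := by
    rw [hF]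
    have : Tendsto (fun x => a₁ * ‖u x‖ + a₂ * ‖u x‖^2
        + a₃ * ‖u x‖^3) atTop (nhds (a₁ * 0 + a₂ * 0^2 + a₃ * 0^3)) :=
      ((tendsto_const_nhds.mul hAtop).add (tendsto_const_nhds.mul (hAtop.pow 2))).add
        (tendsto_const_nhds.mul (hAtop.pow 3))
    simpa using this
  -- u'' → 0 at top
  have hwtop : Tendsto (fun x => deriv (deriv u) x) atTop (nhds 0) := by
    have : Tendsto (fun x => -((F x : ℝ):ℂ) * u x) atTop (nhds (-((0:ℝ):ℂ) * 0)) := by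
      exact (Tendsto.neg (Complex.continuous_ofReal.continuousAt.tendsto.comp hFtop)).mul htop
    simp only [heq']
    simpa using this
  -- global bound on abs u
  obtain ⟨B, hB0, hB⟩ : ∃ B, 0 ≤ B ∧ ∀ x, ‖u x‖ ≤ B := by
    obtain ⟨X₁, hX₁⟩ := (hAtop.eventually (eventually_le_nhds (by norm_num : (0:ℝ) < 1))).exists_forall_of_atTop
    obtain ⟨X₂, hX₂⟩ := (hAbot.eventually (eventually_le_nhds (by norm_num : (0:ℝ) < 1))).exists_forall_of_atBot
    obtain ⟨C, hC⟩ := (isCompact_Icc (a := X₂) (b := X₁)).exists_bound_of_continuousOn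
      (hd1.continuous.continuousOn)
    refine ⟨max 1 C, le_max_of_le_left zero_le_one, fun x => ?_⟩
    rcases le_total x X₁ with hx1 | hx1
    · rcases le_total X₂ x with hx2 | hx2
      · exact le_max_of_le_right (by simpa using hC x ⟨hx2, hx1⟩)
      · exact le_max_of_le_left (hX₂ x hx2)
    · exact le_max_of_le_left (hX₁ x hx1)
  -- u' → 0 at top
  have hv0 : Tendsto (deriv u) atTop (nhds 0) := by
    rw [NormedAddCommGroup.tendsto_nhds_zero]
    intro ε hε
    have h1 : ∀ᶠ x in atTop, ‖u x‖ ≤ ε/8 := by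
      have := htop.norm
      simp only [norm_zero] at this
      exact this.eventually (eventually_le_nhds (by linarith))
    have h2 : ∀ᶠ x in atTop, ‖deriv (deriv u) x‖ ≤ ε/4 := by
      have := hwtop.norm
      simp only [norm_zero] at this
      exact this.eventually (eventually_le_nhds (by linarith))
    obtain ⟨X₀, hX₀⟩ := eventually_atTop.mp (h1.and h2)
    filter_upwards [eventually_ge_atTop X₀] with X hX
    have hbd : ∀ t ∈ Set.Icc X (X+1), ‖u t‖ ≤ ε/8 ∧ ‖deriv (deriv u) t‖ ≤ ε/4 :=
      fun t ht => hX₀ t (le_trans hX ht.1)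
    have key1 : ∀ t ∈ Set.Icc X (X+1), ‖deriv u t - deriv u X‖ ≤ ε/4 * (t - X) :=
      norm_image_sub_le_of_norm_deriv_le_segment'
        (fun t _ => ((hd2 t).hasDerivAt).hasDerivWithinAt)
        (fun t ht => (hbd t (Set.Ico_subset_Icc_self ht)).2)
    have hg : ∀ t ∈ Set.Icc X (X+1), HasDerivWithinAt (fun t => u t - (t - X) • deriv u X)
        (deriv u t - deriv u X) (Set.Icc X (X+1)) t := by
      intro t _
      have h := ((hd1 t).hasDerivAt.sub (((hasDerivAt_id t).sub_const X).smul_const (deriv u X)))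
      exact h.hasDerivWithinAt.congr_deriv (by simp)
    have key2 := norm_image_sub_le_of_norm_deriv_le_segment' hg (fun t ht => by
        have h := key1 t (Set.Ico_subset_Icc_self ht)
        have ht0 : X ≤ t := ht.1
        have ht1 : t - X ≤ 1 := by
          have := le_of_lt ht.2
          linarith
        calc ‖deriv u t - deriv u X‖ ≤ ε/4 * (t - X) := h
          _ ≤ ε/4 * 1 := by
              apply mul_le_mul_of_nonneg_left ht1 (by linarith)
          _ = ε/4 := by ring) (X+1) ⟨by linarith, le_refl _⟩
    simp only [add_sub_cancel_left, one_smul, sub_self, zero_smul, sub_zero] at key2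
    -- key2 : ‖u (X+1) - deriv u X - u X‖ ≤ ε/4 * 1
    have hbX : ‖u X‖ ≤ ε/8 := (hbd X ⟨le_refl _, by linarith⟩).1
    have hbX1 : ‖u (X+1)‖ ≤ ε/8 := (hbd (X+1) ⟨by linarith, le_refl _⟩).1
    have hid : deriv u X = (u (X+1) - u X) - (u (X+1) - deriv u X - u X) := by ring
    calc ‖deriv u X‖ = ‖(u (X+1) - u X) - (u (X+1) - deriv u X - u X)‖ := by rw [← hid]
      _ ≤ ‖u (X+1) - u X‖ + ‖u (X+1) - deriv u X - u X‖ := norm_sub_le _ _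
      _ ≤ (‖u (X+1)‖ + ‖u X‖) + ε/4 * 1 := add_le_add (norm_sub_le _ _) key2
      _ < ε := by linarith
  -- energy
  set E : ℝ → ℝ := fun x => ‖deriv u x‖^2/2 + a₁/3 * ‖u x‖^3
      + a₂/4 * ‖u x‖^4 + a₃/5 * ‖u x‖^5 with hE
  have hEd : ∀ x, HasDerivAt E 0 x := by
    intro x
    have h3 := hdAbsPow (hd1 x).hasDerivAt (n := 3) (by norm_num)
    have h4 := hdAbsPow (hd1 x).hasDerivAt (n := 4) (by norm_num)
    have h5 := hdAbsPow (hd1 x).hasDerivAt (n := 5) (by norm_num)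
    have hv2 := hdAbsSq (hd2 x).hasDerivAt
    have h := (((hv2.div_const 2).add (h3.const_mul (a₁/3))).add
      (h4.const_mul (a₂/4))).add (h5.const_mul (a₃/5))
    rw [hE]
    refine h.congr_deriv ?_
    rw [heq' x]
    have hswap : ((starRingEnd ℂ) (deriv u x) * u x).re
        = ((starRingEnd ℂ) (u x) * deriv u x).re := conj_swap_re _ _
    have hre : ((starRingEnd ℂ) (deriv u x) * (-((F x : ℝ):ℂ) * u x)).re
        = -(F x) * ((starRingEnd ℂ) (u x) * deriv u x).re := by
      have hmul : (starRingEnd ℂ) (deriv u x) * (-((F x : ℝ):ℂ) * u x)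
          = ((-(F x) : ℝ) : ℂ) * ((starRingEnd ℂ) (deriv u x) * u x) := by push_cast; ring
      rw [hmul, Complex.re_ofReal_mul, hswap]
    rw [hre, hF]
    push_cast
    ring
  have hEconst : ∀ x, E x = E 0 := fun x =>
    is_const_of_deriv_eq_zero (fun y => (hEd y).differentiableAt) (fun y => (hEd y).deriv) x 0
  have hvAtop : Tendsto (fun x => ‖deriv u x‖) atTop (nhds 0) := by
    simpa using hv0.norm
  have hEtop : Tendsto E atTop (nhds 0) := by
    rw [hE]
    have h : Tendsto (fun x => ‖deriv u x‖^2/2 + a₁/3 * ‖u x‖^3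
        + a₂/4 * ‖u x‖^4 + a₃/5 * ‖u x‖^5) atTop
        (nhds ((0:ℝ)^2/2 + a₁/3 * 0^3 + a₂/4 * 0^4 + a₃/5 * 0^5)) :=
      ((((hvAtop.pow 2).div_const 2).add (tendsto_const_nhds.mul (hAtop.pow 3))).add
        (tendsto_const_nhds.mul (hAtop.pow 4))).add (tendsto_const_nhds.mul (hAtop.pow 5))
    simpa using h
  have hEzero : ∀ x, E x = 0 := by
    have h : Tendsto E atTop (nhds (E 0)) :=
      Tendsto.congr (fun x => (hEconst x).symm) tendsto_const_nhds
    have h0 : E 0 = 0 := tendsto_nhds_unique h hEtop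
    exact fun x => (hEconst x).trans h0
  -- pointwise bound on u'
  set C : ℝ := 2*|a₁|/3 * B + |a₂|/2 * B^2 + 2*|a₃|/5 * B^3 with hC
  have hC0 : 0 ≤ C := by positivity
  have hbound2 : ∀ x, ‖deriv u x‖^2 ≤ C * ‖u x‖^2 := by
    intro x
    have hz := hEzero x
    rw [hE] at hz
    have hA0 : 0 ≤ ‖u x‖ := norm_nonneg _
    have hAB : ‖u x‖ ≤ B := hB x
    set A := ‖u x‖ with hA
    have h3 : A^3 ≤ B * A^2 := by nlinarith
    have h4 : A^4 ≤ B^2 * A^2 := by nlinarith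
    have h5 : A^5 ≤ B^3 * A^2 := by nlinarith [pow_le_pow_left₀ hA0 hAB 3]
    rw [hC]
    nlinarith [h3, h4, h5, neg_abs_le a₁, le_abs_self a₁, neg_abs_le a₂, le_abs_self a₂,
      neg_abs_le a₃, le_abs_self a₃, pow_nonneg hA0 2, pow_nonneg hA0 3, pow_nonneg hA0 4,
      pow_nonneg hA0 5, abs_nonneg a₁, abs_nonneg a₂, abs_nonneg a₃]
  set K := Real.sqrt C with hK
  have hKbound : ∀ x, ‖deriv u x‖ ≤ K * ‖u x‖ := by
    intro x
    calc ‖deriv u x‖ = Real.sqrt (‖deriv u x‖^2) :=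
          (Real.sqrt_sq (norm_nonneg _)).symm
      _ ≤ Real.sqrt (C * ‖u x‖^2) := Real.sqrt_le_sqrt (hbound2 x)
      _ = K * ‖u x‖ := by
          rw [Real.sqrt_mul hC0, Real.sqrt_sq (norm_nonneg _)]
  -- u never vanishes
  have hnz : ∀ x, u x ≠ 0 := by
    by_contra hcon
    push_neg at hcon
    obtain ⟨x₁, hx₁⟩ := hcon
    obtain ⟨x₀, hx₀⟩ := hne
    apply hx₀
    rcases le_total x₁ x₀ with hle | hle
    · have h := norm_le_gronwallBound_of_norm_deriv_right_le (f := u) (f' := deriv u)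
        (δ := 0) (K := K) (ε := 0) (a := x₁) (b := x₀)
        hd1.continuous.continuousOn
        (fun t _ => (hd1 t).hasDerivAt.hasDerivWithinAt)
        (by simp [hx₁])
        (fun t _ => by simpa using hKbound t)
        x₀ ⟨hle, le_refl _⟩
      rw [gronwallBound_ε0_δ0] at h
      exact norm_le_zero_iff.mp h
    · have href : ∀ t, HasDerivAt (fun s => u (2*x₁ - s)) (-deriv u (2*x₁ - t)) t := by
        intro t
        have hinner : HasDerivAt (fun s : ℝ => 2*x₁ - s) (-1) t := by
          exact ((hasDerivAt_const t (2*x₁)).sub (hasDerivAt_id t)).congr_deriv (by simp)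
        have h := HasDerivAt.scomp (𝕜 := ℝ) t (hd1 (2*x₁ - t)).hasDerivAt hinner
        exact h.congr_deriv (by simp)
      have h := norm_le_gronwallBound_of_norm_deriv_right_le
        (f := fun s => u (2*x₁ - s)) (f' := fun s => -deriv u (2*x₁ - s))
        (δ := 0) (K := K) (ε := 0) (a := x₁) (b := 2*x₁ - x₀)
        ((hd1.continuous.comp ((continuous_const (y := 2*x₁)).sub continuous_id)).continuousOn)
        (fun t _ => (href t).hasDerivWithinAt)
        (by show ‖u (2*x₁ - x₁)‖ ≤ 0
            rw [show 2*x₁ - x₁ = x₁ by ring, hx₁, norm_zero])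
        (fun t _ => by simpa using hKbound (2*x₁ - t))
        (2*x₁ - x₀) ⟨by linarith, le_refl _⟩
      rw [gronwallBound_ε0_δ0] at h
      have h' : ‖u x₀‖ ≤ 0 := by
        simpa [show 2*x₁ - (2*x₁ - x₀) = x₀ by ring] using h
      exact norm_le_zero_iff.mp h'
  -- angular momentum
  have hLd : ∀ x, HasDerivAt (fun y => ((starRingEnd ℂ) (u y) * deriv u y).im) 0 x := by
    intro x
    have h := hdIm ((hdConj (hd1 x).hasDerivAt).mul (hd2 x).hasDerivAt)
    refine h.congr_deriv ?_
    rw [heq' x]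
    simp only [Complex.add_im, Complex.mul_im, Complex.conj_re, Complex.conj_im,
      Complex.neg_re, Complex.neg_im, Complex.mul_re, Complex.ofReal_re, Complex.ofReal_im]
    ring
  have hLconst : ∀ x, ((starRingEnd ℂ) (u x) * deriv u x).im = 0 := by
    have hc : ∀ x, ((starRingEnd ℂ) (u x) * deriv u x).im
        = ((starRingEnd ℂ) (u 0) * deriv u 0).im := fun x =>
      is_const_of_deriv_eq_zero (fun y => (hLd y).differentiableAt) (fun y => (hLd y).deriv) x 0
    have htend : Tendsto (fun x => ((starRingEnd ℂ) (u x) * deriv u x).im) atTop (nhds 0) := by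
      have h : Tendsto (fun x => (starRingEnd ℂ) (u x) * deriv u x) atTop (nhds 0) := by
        have h0 := htop.star.mul hv0
        rw [star_zero, zero_mul] at h0
        exact h0
      have h2 := (Complex.continuous_im.tendsto 0).comp h
      simp only [Complex.zero_im] at h2
      exact h2
    have h0 : ((starRingEnd ℂ) (u 0) * deriv u 0).im = 0 :=
      tendsto_nhds_unique (Tendsto.congr (fun x => (hc x).symm) tendsto_const_nhds) htend
    exact fun x => (hc x).trans h0
  have hreal : ∀ x, (starRingEnd ℂ) (u x) * deriv u x
      = ((((starRingEnd ℂ) (u x) * deriv u x).re : ℝ) : ℂ) := by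
    intro x
    apply Complex.ext
    · simp
    · simp [hLconst x]
  -- abs u positive, differentiable
  have hr0 : ∀ x, 0 < ‖u x‖ := fun x => norm_pos_iff.mpr (hnz x)
  have hrd : ∀ x, HasDerivAt (fun y => ‖u y‖)
      (((starRingEnd ℂ) (u x) * deriv u x).re / ‖u x‖) x := by
    intro x
    have hsq := hdAbsSq (hd1 x).hasDerivAt
    have hpos : ‖u x‖^2 ≠ 0 := pow_ne_zero 2 (hr0 x).ne'
    have h := (Real.hasDerivAt_sqrt hpos).comp x hsq
    have hfun : (fun y => ‖u y‖) = fun y => Real.sqrt (‖u y‖^2) := by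
      funext y; rw [Real.sqrt_sq (norm_nonneg _)]
    rw [hfun]
    refine h.congr_deriv ?_
    rw [Real.sqrt_sq (norm_nonneg _)]
    field_simp
  -- the phase is constant
  set c₀ : ℂ := u 0 * (((‖u 0‖)⁻¹ : ℝ) : ℂ) with hc₀
  have hc0d : ∀ x, HasDerivAt (fun y => u y * (((‖u y‖)⁻¹ : ℝ) : ℂ)) 0 x := by
    intro x
    have hrne : ‖u x‖ ≠ 0 := (hr0 x).ne'
    have h1 := (hrd x).inv hrne
    have h2 := hdOfReal h1
    have h3 := (hd1 x).hasDerivAt.mul h2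
    refine h3.congr_deriv ?_
    have hkey : u x * ((((starRingEnd ℂ) (u x) * deriv u x).re : ℝ) : ℂ)
        = ((‖u x‖ : ℝ) : ℂ)^2 * deriv u x := by
      rw [← hreal x, ← mul_assoc, Complex.mul_conj, Complex.normSq_eq_norm_sq]
      push_cast
      ring
    have hrne' : ((‖u x‖ : ℝ) : ℂ) ≠ 0 := Complex.ofReal_ne_zero.mpr hrne
    simp only [Pi.inv_apply, Complex.mul_re, Complex.conj_re, Complex.conj_im, Complex.ofReal_sub,
      Complex.ofReal_mul, Complex.ofReal_inv, Complex.ofReal_neg, Complex.ofReal_div, Complex.ofReal_pow]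
    have hkey2 : u x * ((((u x).re * (deriv u x).re + (u x).im * (deriv u x).im : ℝ)) : ℂ)
        = ((‖u x‖ : ℝ) : ℂ)^2 * deriv u x := by
      have hre : ((starRingEnd ℂ) (u x) * deriv u x).re
          = (u x).re * (deriv u x).re + (u x).im * (deriv u x).im := by
        simp [Complex.mul_re]
      rw [← hre]
      exact hkey
    push_cast at hkey2
    field_simp
    linear_combination (-1 : ℂ) * hkey2
  have hcconst : ∀ x, u x * (((‖u x‖)⁻¹ : ℝ) : ℂ) = c₀ := fun x =>
    is_const_of_deriv_eq_zero (fun y => (hc0d y).differentiableAt) (fun y => (hc0d y).deriv) x 0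
  have huc : ∀ x, u x = c₀ * ((‖u x‖ : ℝ) : ℂ) := by
    intro x
    rw [← hcconst x]
    have hrne' : ((‖u x‖ : ℝ) : ℂ) ≠ 0 := Complex.ofReal_ne_zero.mpr (hr0 x).ne'
    rw [Complex.ofReal_inv]
    field_simp
  have habs : ‖c₀‖ = 1 := by
    rw [hc₀, norm_mul, Complex.norm_real,
      Real.norm_of_nonneg (inv_nonneg.mpr (norm_nonneg _))]
    exact mul_inv_cancel₀ (hr0 0).ne'
  -- assemble
  have hcc : (starRingEnd ℂ) c₀ * c₀ = 1 := by
    rw [mul_comm, Complex.mul_conj, Complex.normSq_eq_norm_sq, habs]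
    norm_num
  have hρr : ∀ x, (starRingEnd ℂ) c₀ * u x = ((‖u x‖ : ℝ) : ℂ) := by
    intro x
    have h := congrArg (fun z => (starRingEnd ℂ) c₀ * z) (huc x)
    rw [← mul_assoc, hcc, one_mul] at h
    exact h
  have hρre : ∀ x, ((starRingEnd ℂ) c₀ * u x).re = ‖u x‖ := by
    intro x
    rw [hρr x, Complex.ofReal_re]
  have hexp : Complex.exp ((Complex.arg c₀ : ℂ) * Complex.I) = c₀ := by
    have h := Complex.norm_mul_exp_arg_mul_I c₀
    rwa [habs, Complex.ofReal_one, one_mul] at h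
  refine ⟨Complex.arg c₀, fun x => ((starRingEnd ℂ) c₀ * u x).re, ?_, ?_, ?_, ?_, ?_⟩
  · intro x
    show (0:ℝ) < ((starRingEnd ℂ) c₀ * u x).re
    rw [hρre x]
    exact hr0 x
  · intro x
    beta_reduce
    have hdd1 : ∀ y, HasDerivAt (fun z => ((starRingEnd ℂ) c₀ * u z).re)
        (((starRingEnd ℂ) c₀ * deriv u y).re) y := fun y =>
      hdRe (HasDerivAt.const_mul ((starRingEnd ℂ) c₀) (hd1 y).hasDerivAt)
    have hder1 : deriv (fun z => ((starRingEnd ℂ) c₀ * u z).re)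
        = fun y => ((starRingEnd ℂ) c₀ * deriv u y).re := funext fun y => (hdd1 y).deriv
    rw [hder1]
    have hdd2 : HasDerivAt (fun y => ((starRingEnd ℂ) c₀ * deriv u y).re)
        (((starRingEnd ℂ) c₀ * deriv (deriv u) x).re) x :=
      hdRe (HasDerivAt.const_mul ((starRingEnd ℂ) c₀) (hd2 x).hasDerivAt)
    rw [hdd2.deriv, heq' x]
    have hmul : (starRingEnd ℂ) c₀ * (-((F x : ℝ):ℂ) * u x)
        = ((-(F x) : ℝ) : ℂ) * ((starRingEnd ℂ) c₀ * u x) := by push_cast; ring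
    rw [hmul, Complex.re_ofReal_mul, hρre x,
      abs_of_nonneg (norm_nonneg (u x)), hF]
    ring
  · have hfun : (fun x => ((starRingEnd ℂ) c₀ * u x).re) = fun x => ‖u x‖ :=
      funext hρre
    rw [hfun]
    exact hAtop
  · have hfun : (fun x => ((starRingEnd ℂ) c₀ * u x).re) = fun x => ‖u x‖ :=
      funext hρre
    rw [hfun]
    exact hAbot
  · intro x
    show u x = _ * (((((starRingEnd ℂ) c₀ * u x).re : ℝ)) : ℂ)
    rw [hρre x, hexp]
    exact huc x
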